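/- Let V be a finite nonempty type and let p, q : V → ℝ be probability mass functions (p v ≥ 0, q v ≥ 0 for all v, and Σ_v p v = Σ_v q v = 1) with p v + q v > 0 for every v. Then, with the convention 0 · log x = 0, the supremum over all D : V → ℝ with 0 < D v < 1 for all v of Σ_v (p v · log(D v) + q v · log(1 − D v)) equals Σ_v (p v · log(p v / (p v + q v)) + q v · log(q v / (p v + q v))). -/

import Mathlib

open Finset Real in
lemma megan_pointwise (a b d : ℝ) (ha : 0 ≤ a) (hb : 0 ≤ b) (hab : 0 < a + b)
    (hd0 : 0 < d) (hd1 : d < 1) :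
    a * Real.log d + b * Real.log (1 - d) ≤
      a * Real.log (a / (a + b)) + b * Real.log (b / (a + b)) := by
  have h1d : (0:ℝ) < 1 - d := by linarith
  rcases eq_or_lt_of_le ha with ha0 | ha0
  · have hb0 : 0 < b := by linarith
    rw [← ha0]
    simp only [zero_mul, zero_add, div_self hb0.ne', Real.log_one, mul_zero, add_zero]
    have : Real.log (1 - d) ≤ 0 := Real.log_nonpos (by linarith) (by linarith)
    nlinarith
  rcases eq_or_lt_of_le hb with hb0 | hb0
  · rw [← hb0]
    simp only [zero_mul, add_zero, div_self ha0.ne', Real.log_one, mul_zero]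
    have : Real.log d ≤ 0 := Real.log_nonpos (le_of_lt hd0) (le_of_lt hd1)
    nlinarith
  · have h1 : Real.log d - Real.log (a / (a + b)) = Real.log (d * (a + b) / a) := by
      rw [Real.log_div (by positivity) ha0.ne', Real.log_div ha0.ne' hab.ne',
        Real.log_mul hd0.ne' hab.ne']
      ring
    have h2 : Real.log (1 - d) - Real.log (b / (a + b)) =
        Real.log ((1 - d) * (a + b) / b) := by
      rw [Real.log_div (by positivity) hb0.ne', Real.log_div hb0.ne' hab.ne',
        Real.log_mul h1d.ne' hab.ne']
      ring
    have k1 : Real.log (d * (a + b) / a) ≤ d * (a + b) / a - 1 :=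
      Real.log_le_sub_one_of_pos (by positivity)
    have k2 : Real.log ((1 - d) * (a + b) / b) ≤ (1 - d) * (a + b) / b - 1 :=
      Real.log_le_sub_one_of_pos (by positivity)
    have e1 : a * (d * (a + b) / a - 1) = d * (a + b) - a := by field_simp
    have e2 : b * ((1 - d) * (a + b) / b - 1) = (1 - d) * (a + b) - b := by field_simp
    nlinarith [mul_le_mul_of_nonneg_left k1 ha, mul_le_mul_of_nonneg_left k2 hb]

open Finset in
/-- The supremum over discriminators `D : V → (0,1)` of
`∑ v, (p v · log (D v) + q v · log (1 − D v))` equals the value at the optimal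
discriminator `D* v = p v / (p v + q v)`. -/
theorem megan_sup_discriminator_value {V : Type*} [Fintype V] [Nonempty V]
    (p q : V → ℝ) (hp : ∀ v, 0 ≤ p v) (hq : ∀ v, 0 ≤ q v)
    (hps : ∑ v, p v = 1) (hqs : ∑ v, q v = 1)
    (hpq : ∀ v, 0 < p v + q v) :
    sSup {x : ℝ | ∃ D : V → ℝ,
        (∀ v, 0 < D v ∧ D v < 1) ∧
        x = ∑ v, (p v * Real.log (D v) + q v * Real.log (1 - D v))} =
      ∑ v, (p v * Real.log (p v / (p v + q v)) + q v * Real.log (q v / (p v + q v))) := by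
  set S := {x : ℝ | ∃ D : V → ℝ,
      (∀ v, 0 < D v ∧ D v < 1) ∧
      x = ∑ v, (p v * Real.log (D v) + q v * Real.log (1 - D v))} with hS
  set T := ∑ v, (p v * Real.log (p v / (p v + q v)) + q v * Real.log (q v / (p v + q v)))
    with hT
  have hub : ∀ x ∈ S, x ≤ T := by
    rintro x ⟨D, hD, rfl⟩
    apply Finset.sum_le_sum
    intro v _
    exact megan_pointwise (p v) (q v) (D v) (hp v) (hq v) (hpq v) (hD v).1 (hD v).2
  have hne : S.Nonempty := by
    refine ⟨_, fun _ => (1:ℝ)/2, fun v => ⟨by norm_num, by norm_num⟩, rfl⟩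
  have hbdd : BddAbove S := ⟨T, hub⟩
  refine le_antisymm (csSup_le hne hub) ?_
  -- approximating family
  set F : ℝ → ℝ := fun ε => ∑ v,
      (p v * Real.log ((p v + ε) / (p v + q v + 2 * ε)) +
       q v * Real.log ((q v + ε) / (p v + q v + 2 * ε))) with hF
  have hmem : ∀ ε : ℝ, 0 < ε → F ε ∈ S := by
    intro ε hε
    refine ⟨fun v => (p v + ε) / (p v + q v + 2 * ε), ?_, ?_⟩
    · intro v
      have hden : 0 < p v + q v + 2 * ε := by linarith [hpq v]
      constructor
      · have : 0 < p v + ε := by linarith [hp v]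
        positivity
      · rw [div_lt_one hden]
        linarith [hq v]
    · apply Finset.sum_congr rfl
      intro v _
      have hden : p v + q v + 2 * ε ≠ 0 := ne_of_gt (by linarith [hpq v])
      have : 1 - (p v + ε) / (p v + q v + 2 * ε) = (q v + ε) / (p v + q v + 2 * ε) := by
        rw [eq_div_iff hden, sub_mul, div_mul_cancel₀ _ hden]; ring
      rw [this]
  have hle : ∀ ε : ℝ, 0 < ε → F ε ≤ sSup S := fun ε hε => le_csSup hbdd (hmem ε hε)
  -- limit of F as ε → 0⁺ is T
  have htend : Filter.Tendsto F (nhdsWithin 0 (Set.Ioi 0)) (nhds T) := by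
    rw [hF, hT]
    apply Filter.Tendsto.mono_left _ nhdsWithin_le_nhds
    apply tendsto_finset_sum
    intro v _
    have key : ∀ a : ℝ, 0 ≤ a →
        Filter.Tendsto (fun ε => a * Real.log ((a + ε) / (p v + q v + 2 * ε)))
          (nhds 0) (nhds (a * Real.log (a / (p v + q v)))) := by
      intro a haa
      rcases eq_or_lt_of_le haa with h0 | h0
      · simp only [← h0, zero_mul]
        exact tendsto_const_nhds
      · have hden : (p v + q v : ℝ) ≠ 0 := (hpq v).ne'
        have hpos : 0 < a / (p v + q v) := div_pos h0 (hpq v)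
        have hdiv : Filter.Tendsto (fun ε : ℝ => (a + ε) / (p v + q v + 2 * ε))
            (nhds 0) (nhds (a / (p v + q v))) := by
          have h1 : Filter.Tendsto (fun ε : ℝ => a + ε) (nhds 0) (nhds a) := by
            exact Continuous.tendsto' (by fun_prop) (0:ℝ) a (by simp)
          have h2 : Filter.Tendsto (fun ε : ℝ => p v + q v + 2 * ε) (nhds 0)
              (nhds (p v + q v)) := by
            exact Continuous.tendsto' (by fun_prop) (0:ℝ) (p v + q v) (by simp)
          exact h1.div h2 hden
        exact (((Real.continuousAt_log hpos.ne').tendsto.comp hdiv).const_mul a)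
    exact (key (p v) (hp v)).add (key (q v) (hq v))
  have hev : ∀ᶠ ε in nhdsWithin (0:ℝ) (Set.Ioi 0), F ε ≤ sSup S := by
    filter_upwards [self_mem_nhdsWithin] with ε hε
    exact hle ε hε
  exact le_of_tendsto htend hev
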